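/- Let R > 1/4, 0 ≤ r < (√R − 1/2)², |z| = √r, and w ∈ D(0; r). Then |ln| (R² − w̄(z+i/2)²) / (R² − w̄ z²) || ≤ (2√r + 1/2) / (R − (√r + 1/2)²). -/

import Mathlib

open Complex Real

lemma abs_log_div_le_of_bounds (a b c mlo : ℝ) (hm : 0 < mlo) (ha : mlo ≤ a)
    (hb : mlo ≤ b) (h1 : a - b ≤ c) (h2 : b - a ≤ c) (hc : 0 ≤ c) :
    |Real.log (a / b)| ≤ c / mlo := by
  have ha0 : 0 < a := lt_of_lt_of_le hm ha
  have hb0 : 0 < b := lt_of_lt_of_le hm hb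
  rw [abs_le]
  constructor
  · have hlog : Real.log (b / a) ≤ b / a - 1 :=
      Real.log_le_sub_one_of_pos (div_pos hb0 ha0)
    have hrev : Real.log (b / a) = - Real.log (a / b) := by
      rw [Real.log_div hb0.ne' ha0.ne', Real.log_div ha0.ne' hb0.ne']; ring
    have hfrac : b / a - 1 ≤ c / mlo := by
      rw [div_sub_one ha0.ne', div_le_div_iff₀ ha0 hm]
      nlinarith
    linarith [hrev ▸ hlog]
  · have hlog : Real.log (a / b) ≤ a / b - 1 :=
      Real.log_le_sub_one_of_pos (div_pos ha0 hb0)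
    have hfrac : a / b - 1 ≤ c / mlo := by
      rw [div_sub_one hb0.ne', div_le_div_iff₀ hb0 hm]
      nlinarith
    linarith

set_option maxHeartbeats 1000000 in
/-- For `R > 1/4`, `0 ≤ r < (√R − 1/2)²`, `|z| = √r` and `|w| < r`:
`|ln|(R² − w̄(z+i/2)²)/(R² − w̄ z²)|| ≤ (2√r + 1/2)/(R − (√r + 1/2)²)`. -/
theorem log_blaschke_shift_estimate
    (R r : ℝ) (hR : 1 / 4 < R) (hr0 : 0 ≤ r) (hr : r < (Real.sqrt R - 1 / 2) ^ 2)
    (z : ℂ) (hz : ‖z‖ = Real.sqrt r)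
    (w : ℂ) (hw : ‖w‖ < r) :
    |Real.log ‖
        (((R : ℂ) ^ 2 - (starRingEnd ℂ) w * (z + I / 2) ^ 2) /
          ((R : ℂ) ^ 2 - (starRingEnd ℂ) w * z ^ 2))‖| ≤
      (2 * Real.sqrt r + 1 / 2) / (R - (Real.sqrt r + 1 / 2) ^ 2) := by
  set s := Real.sqrt r with hsdef
  have hs0 : 0 ≤ s := Real.sqrt_nonneg r
  have hsr : s ^ 2 = r := Real.sq_sqrt hr0
  have hrpos : 0 < r := lt_of_le_of_lt (norm_nonneg w) hw
  have hRpos : 0 < R := lt_trans (by norm_num) hR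
  have h1 : s < Real.sqrt R - 1/2 := by
    have h := Real.sqrt_lt_sqrt hr0 hr
    have hhalf : (1:ℝ)/2 < Real.sqrt R := by
      rw [show (1:ℝ)/2 = Real.sqrt (1/4) by
        rw [show (1:ℝ)/4 = (1/2)^2 by norm_num, Real.sqrt_sq (by norm_num)]]
      exact Real.sqrt_lt_sqrt (by norm_num) hR
    rwa [Real.sqrt_sq (by linarith)] at h
  have hq : (s + 1/2)^2 < R := by
    have h2 : (s + 1/2)^2 < (Real.sqrt R)^2 := by nlinarith [Real.sqrt_nonneg R]
    rwa [Real.sq_sqrt hRpos.le] at h2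
  have hrR : r < R := by nlinarith
  have hmpos : 0 < R^2 - r*(s+1/2)^2 := by nlinarith
  have habsR2 : ‖((R:ℂ)^2)‖ = R^2 := by
    rw [norm_pow, Complex.norm_real, Real.norm_eq_abs, abs_of_pos hRpos]
  have habsw : ‖((starRingEnd ℂ) w)‖ = ‖w‖ := Complex.norm_conj w
  have habszI : ‖(z + I/2)‖ ≤ s + 1/2 := by
    calc ‖(z + I/2)‖ ≤ ‖z‖ + ‖(I/2)‖ :=
          norm_add_le _ _
      _ = s + 1/2 := by rw [hz, norm_div, Complex.norm_I]; norm_num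
  -- lower bounds on |N| and |D|
  have hbD : R^2 - r*(s+1/2)^2 ≤
      ‖((R:ℂ)^2 - (starRingEnd ℂ) w * z^2)‖ := by
    have h3 : ‖((starRingEnd ℂ) w * z^2)‖ ≤ r * (s+1/2)^2 := by
      rw [norm_mul, habsw, norm_pow, hz]
      nlinarith [norm_nonneg w]
    have h4 := norm_sub_norm_le ((R:ℂ)^2) ((starRingEnd ℂ) w * z^2)
    rw [habsR2] at h4
    linarith
  have haN : R^2 - r*(s+1/2)^2 ≤
      ‖((R:ℂ)^2 - (starRingEnd ℂ) w * (z + I/2)^2)‖ := by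
    have h3 : ‖((starRingEnd ℂ) w * (z + I/2)^2)‖ ≤ r * (s+1/2)^2 := by
      rw [norm_mul, habsw, norm_pow]
      have h5 : ‖(z+I/2)‖^2 ≤ (s+1/2)^2 :=
        pow_le_pow_left₀ (norm_nonneg _) habszI 2
      exact mul_le_mul hw.le h5 (by positivity) hr0
    have h4 := norm_sub_norm_le ((R:ℂ)^2) ((starRingEnd ℂ) w * (z + I/2)^2)
    rw [habsR2] at h4
    linarith
  -- |N - D| ≤ r * (s + 1/4)
  have hND : ‖(((R:ℂ)^2 - (starRingEnd ℂ) w * (z + I/2)^2) -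
      ((R:ℂ)^2 - (starRingEnd ℂ) w * z^2))‖ ≤ r * (s + 1/4) := by
    have hdiff : ((R:ℂ)^2 - (starRingEnd ℂ) w * (z + I/2)^2) -
        ((R:ℂ)^2 - (starRingEnd ℂ) w * z^2)
        = (starRingEnd ℂ) w * (-(I^2)/4 - I * z) := by ring
    rw [hdiff, Complex.I_sq, norm_mul, habsw]
    have h6 : ‖(-(-1:ℂ)/4 - I * z)‖ ≤ 1/4 + s := by
      calc ‖(-(-1:ℂ)/4 - I * z)‖
          ≤ ‖(-(-1:ℂ)/4)‖ + ‖(I * z)‖ := by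
            exact norm_sub_le _ _
        _ = 1/4 + s := by
            rw [norm_mul, Complex.norm_I, one_mul, hz]; norm_num
    nlinarith [norm_nonneg w, norm_nonneg (-(-1:ℂ)/4 - I*z)]
  have habd := abs_norm_sub_norm_le ((R:ℂ)^2 - (starRingEnd ℂ) w * (z + I/2)^2)
      ((R:ℂ)^2 - (starRingEnd ℂ) w * z^2)
  replace habd := habd.trans hND
  rw [abs_le] at habd
  have hc0 : 0 ≤ r * (s + 1/4) := by positivity
  rw [norm_div]
  have key := abs_log_div_le_of_bounds
      (‖((R:ℂ)^2 - (starRingEnd ℂ) w * (z + I/2)^2)‖)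
      (‖((R:ℂ)^2 - (starRingEnd ℂ) w * z^2)‖)
      (r * (s + 1/4)) (R^2 - r*(s+1/2)^2) hmpos haN hbD
      habd.2 (by linarith [habd.1]) hc0
  refine le_trans key ?_
  rw [div_le_div_iff₀ hmpos (by nlinarith)]
  nlinarith [mul_nonneg (mul_nonneg hrpos.le hs0) (sub_nonneg.2 hq.le),
    mul_nonneg hrpos.le (sub_nonneg.2 hq.le),
    mul_nonneg (mul_nonneg hrpos.le hs0) (sub_nonneg.2 hrR.le),
    mul_nonneg hrpos.le (sub_nonneg.2 hrR.le),
    mul_nonneg (sub_nonneg.2 hrR.le) hRpos.le, sq_nonneg (s+1/2)]
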